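/- Let d ≥ 1, n ≥ 1, let G be a symmetric positive definite d×d real matrix with G ⪰ I (Loewner order), and let x_1, …, x_n ∈ ℝ^d satisfy ‖x_j‖₂ ≤ 1 for all j. Define W_0 := G and W_j := W_{j−1} + x_j x_j^⊤ for 1 ≤ j ≤ n. Then Σ_{j=1}^n x_j^⊤ W_{j−1}^{−1} x_j ≤ 2 log( det(W_n) / det(G) ). -/

import Mathlib

open Matrix

/-- The Euclidean norm of a vector in `ℝ^d`. -/
noncomputable def euclNorm {d : ℕ} (v : Fin d → ℝ) : ℝ :=
  Real.sqrt (v ⬝ᵥ v)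

/-- The design (Gram) matrix after `j` rounds with base matrix `G0`:
`G0 + Σ_{i<j} x_i x_iᵀ` (0-indexed, so this is `W_j` with `W_0 = G0`). -/
noncomputable def gram {d : ℕ} (G0 : Matrix (Fin d) (Fin d) ℝ) (x : ℕ → Fin d → ℝ) (j : ℕ) :
    Matrix (Fin d) (Fin d) ℝ :=
  G0 + ∑ i ∈ Finset.range j, vecMulVec (x i) (x i)

lemma psd_vecMulVec {d : ℕ} (v : Fin d → ℝ) : (vecMulVec v v).PosSemidef := by
  rw [vecMulVec_eq (Fin 1)]
  have h : (replicateCol (Fin 1) v) = (replicateRow (Fin 1) v)ᴴ := by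
    rw [conjTranspose_replicateRow]; simp
  rw [h]
  exact posSemidef_conjTranspose_mul_self _

lemma cs_dot {d : ℕ} (v w : Fin d → ℝ) : (v ⬝ᵥ w) ^ 2 ≤ (v ⬝ᵥ v) * (w ⬝ᵥ w) := by
  have := Finset.sum_mul_sq_le_sq_mul_sq Finset.univ v w
  simp only [dotProduct, sq] at this ⊢
  simpa [sq] using this

lemma dot_self_nonneg {d : ℕ} (v : Fin d → ℝ) : 0 ≤ v ⬝ᵥ v :=
  Finset.sum_nonneg fun i _ => mul_self_nonneg _

lemma quad_le_one {d : ℕ} {A : Matrix (Fin d) (Fin d) ℝ} (hA : A.PosDef)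
    (hAI : (A - 1).PosSemidef) {v : Fin d → ℝ} (hv : v ⬝ᵥ v ≤ 1) :
    v ⬝ᵥ A⁻¹ *ᵥ v ≤ 1 := by
  have hdet : IsUnit A.det := isUnit_iff_ne_zero.mpr hA.det_pos.ne'
  set w := A⁻¹ *ᵥ v with hw
  have hAw : A *ᵥ w = v := by
    rw [hw, mulVec_mulVec, Matrix.mul_nonsing_inv _ hdet, one_mulVec]
  have hwv : v ⬝ᵥ w = w ⬝ᵥ (A *ᵥ w) := by
    conv_lhs => rw [← hAw]
    exact dotProduct_comm _ _
  have h1 : 0 ≤ star w ⬝ᵥ ((A - 1) *ᵥ w) := hAI.dotProduct_mulVec_nonneg w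
  have hsw : star w = w := by funext i; simp
  rw [hsw, sub_mulVec, one_mulVec, dotProduct_sub] at h1
  have h0 : 0 ≤ w ⬝ᵥ w := dot_self_nonneg w
  have hu : 0 ≤ v ⬝ᵥ w := by
    have := hA.inv.posSemidef.dotProduct_mulVec_nonneg v
    have hsv : star v = v := by funext i; simp
    rwa [hsv] at this
  have hcs := cs_dot v w
  nlinarith [hcs, hv, h0, h1, hwv, hu]

lemma mul_vecMulVec {d : ℕ} (A : Matrix (Fin d) (Fin d) ℝ) (u v : Fin d → ℝ) :
    A * vecMulVec u v = vecMulVec (A *ᵥ u) v := by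
  ext i j
  simp only [mul_apply, vecMulVec_apply, mulVec, dotProduct]
  rw [Finset.sum_mul]
  exact Finset.sum_congr rfl fun k _ => by ring

lemma det_step {d : ℕ} {A : Matrix (Fin d) (Fin d) ℝ} (hA : A.PosDef) (v : Fin d → ℝ) :
    (A + vecMulVec v v).det = A.det * (1 + v ⬝ᵥ A⁻¹ *ᵥ v) := by
  have hdet : IsUnit A.det := isUnit_iff_ne_zero.mpr hA.det_pos.ne'
  have key : A + vecMulVec v v = A * (1 + vecMulVec (A⁻¹ *ᵥ v) v) := by
    rw [Matrix.mul_add, Matrix.mul_one, mul_vecMulVec, mulVec_mulVec,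
      Matrix.mul_nonsing_inv _ hdet, one_mulVec]
  rw [key, det_mul, vecMulVec_eq (Fin 1), det_one_add_replicateCol_mul_replicateRow]

lemma scalar_log {u : ℝ} (h0 : 0 ≤ u) (h1 : u ≤ 1) : u ≤ 2 * Real.log (1 + u) := by
  have hpos : (0:ℝ) < 1 + u := by linarith
  have h2 : u / 2 ≤ Real.log (1 + u) := by
    rw [Real.le_log_iff_exp_le hpos]
    have he := Real.add_one_le_exp (-(u/2))
    have hp := Real.exp_pos (-(u/2))
    have hmul : Real.exp (u/2) * Real.exp (-(u/2)) = 1 := by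
      rw [← Real.exp_add]; simp
    nlinarith [Real.exp_pos (u/2), he, hp, hmul, mul_nonneg h0 h0]
  linarith

/-- Pooled elliptical potential with base matrix `G ⪰ I`:
`Σ_{j=1}^n x_jᵀ W_{j-1}⁻¹ x_j ≤ 2 log( det W_n / det G )`. -/
theorem stmt_5 {d n : ℕ} (hd : 1 ≤ d) (hn : 1 ≤ n)
    (G : Matrix (Fin d) (Fin d) ℝ) (hG : G.PosDef) (hGI : (G - 1).PosSemidef)
    (x : ℕ → Fin d → ℝ) (hx : ∀ j < n, euclNorm (x j) ≤ 1) :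
    (∑ j ∈ Finset.range n, x j ⬝ᵥ (gram G x j)⁻¹.mulVec (x j)) ≤
      2 * Real.log ((gram G x n).det / G.det) := by
  have hpsd : ∀ j : ℕ, (∑ i ∈ Finset.range j, vecMulVec (x i) (x i)).PosSemidef := by
    intro j
    induction j with
    | zero => simpa using (Matrix.PosSemidef.zero :
        (0 : Matrix (Fin d) (Fin d) ℝ).PosSemidef)
    | succ j ih =>
      rw [Finset.sum_range_succ]
      exact ih.add (psd_vecMulVec _)
  have hW : ∀ j, (gram G x j).PosDef := fun j => hG.add_posSemidef (hpsd j)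
  have hWI : ∀ j, (gram G x j - 1).PosSemidef := by
    intro j
    have h : gram G x j - 1 = (G - 1) + ∑ i ∈ Finset.range j, vecMulVec (x i) (x i) := by
      rw [_root_.gram]; abel
    rw [h]
    exact hGI.add (hpsd j)
  set u : ℕ → ℝ := fun j => x j ⬝ᵥ (gram G x j)⁻¹ *ᵥ x j with hu_def
  have hu0 : ∀ j, 0 ≤ u j := by
    intro j
    have := (hW j).inv.posSemidef.dotProduct_mulVec_nonneg (x j)
    have hsv : star (x j) = x j := by funext i; simp
    rwa [hsv] at this
  have hlog : ∀ m : ℕ, Real.log ((gram G x m).det) =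
      Real.log G.det + ∑ j ∈ Finset.range m, Real.log (1 + u j) := by
    intro m
    induction m with
    | zero => simp [_root_.gram]
    | succ m ih =>
      have hgram : gram G x (m+1) = gram G x m + vecMulVec (x m) (x m) := by
        rw [_root_.gram, _root_.gram, Finset.sum_range_succ, add_assoc]
      have h1pos : (0:ℝ) < 1 + u m := by linarith [hu0 m]
      rw [hgram, det_step (hW m), Real.log_mul (hW m).det_pos.ne' h1pos.ne', ih,
        Finset.sum_range_succ]
      ring
  have hsum : (∑ j ∈ Finset.range n, u j) ≤ ∑ j ∈ Finset.range n, 2 * Real.log (1 + u j) := by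
    apply Finset.sum_le_sum
    intro j hj
    apply scalar_log (hu0 j)
    apply quad_le_one (hW j) (hWI j)
    have hxj := hx j (Finset.mem_range.mp hj)
    have hnn := dot_self_nonneg (x j)
    have hsq := Real.sq_sqrt hnn
    rw [euclNorm] at hxj
    nlinarith [Real.sqrt_nonneg (x j ⬝ᵥ x j)]
  calc (∑ j ∈ Finset.range n, x j ⬝ᵥ (gram G x j)⁻¹.mulVec (x j))
      = ∑ j ∈ Finset.range n, u j := rfl
    _ ≤ ∑ j ∈ Finset.range n, 2 * Real.log (1 + u j) := hsum
    _ = 2 * (Real.log (gram G x n).det - Real.log G.det) := by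
        rw [← Finset.mul_sum, hlog n]; ring
    _ = 2 * Real.log ((gram G x n).det / G.det) := by
        rw [Real.log_div (hW n).det_pos.ne' hG.det_pos.ne']
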